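/- arXiv:2011.12478 — 6 statements merged into one kernel-verified Lean document; each statement's English description precedes it below -/
import Mathlib

section
/- Let M, M' ⊆ ℝ^d be nonempty sets and let 0 < h < r. Suppose: (i) every point of M is within distance h of M' and every point of M' is within distance h of M; (ii) there exist maps P : N → M and P' : N' → M', where N (resp. N') is the closed h-neighborhood of M (resp. M'), such that P and P' are r/(r−h)-Lipschitz and restrict to the identity on M and on M', respectively. Then for all x, x' ∈ M ∩ M': d_{M'}(x,x') ≤ (r/(r−h))·d_M(x,x') and d_M(x,x') ≤ (r/(r−h))·d_{M'}(x,x'), and consequently |d_M(x,x') − d_{M'}(x,x')| ≤ (h/(r−h))·min{d_M(x,x'), d_{M'}(x,x')} whenever these distances are finite. -/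
open Set
open scoped ENNReal NNReal

/-- The intrinsic distance on a set `A`: the infimum of the lengths (total variations) of
continuous curves `γ : [0,1] → A` joining the two points, in `[0,∞]`. -/
noncomputable def intrinsicDist {E : Type*} [PseudoEMetricSpace E] (A : Set E) (x x' : E) :
    ℝ≥0∞ :=
  sInf {L | ∃ γ : ℝ → E, ContinuousOn γ (Icc 0 1) ∧ MapsTo γ (Icc 0 1) A ∧
    γ 0 = x ∧ γ 1 = x' ∧ L = eVariationOn γ (Icc 0 1)}

lemma intrinsicDist_le_of_retract {E : Type*} [PseudoEMetricSpace E]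
    {A B S : Set E} {f : E → E} {K : ℝ≥0} (hK : K ≠ 0)
    (hf : LipschitzOnWith K f S) (hAS : A ⊆ S) (hfB : MapsTo f A B)
    {x x' : E} (hx : f x = x) (hx' : f x' = x') :
    intrinsicDist B x x' ≤ (K : ℝ≥0∞) * intrinsicDist A x x' := by
  have hK0 : (K : ℝ≥0∞) ≠ 0 := ENNReal.coe_ne_zero.2 hK
  rw [mul_comm, ← ENNReal.div_le_iff_le_mul (Or.inl hK0) (Or.inl ENNReal.coe_ne_top)]
  apply le_sInf
  rintro L ⟨γ, hγc, hγm, hγ0, hγ1, rfl⟩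
  rw [ENNReal.div_le_iff_le_mul (Or.inl hK0) (Or.inl ENNReal.coe_ne_top), mul_comm]
  have hmS : MapsTo γ (Icc 0 1) S := hγm.mono_right hAS
  have hmem : eVariationOn (f ∘ γ) (Icc 0 1) ∈
      {L | ∃ γ : ℝ → E, ContinuousOn γ (Icc 0 1) ∧ MapsTo γ (Icc 0 1) B ∧
        γ 0 = x ∧ γ 1 = x' ∧ L = eVariationOn γ (Icc 0 1)} :=
    ⟨f ∘ γ, hf.continuousOn.comp hγc hmS, hfB.comp hγm,
      by simp [Function.comp, hγ0, hx], by simp [Function.comp, hγ1, hx'], rfl⟩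
  calc intrinsicDist B x x' ≤ eVariationOn (f ∘ γ) (Icc 0 1) := sInf_le hmem
    _ ≤ (K : ℝ≥0∞) * eVariationOn γ (Icc 0 1) := hf.comp_eVariationOn_le hmS

/-- If `M, M'` are nonempty, within Hausdorff distance `h < r` of each other,
and admit `r/(r−h)`-Lipschitz retractions `P, P'` of their closed `h`-neighborhoods onto them,
then the intrinsic distances of points of `M ∩ M'` agree up to a factor `r/(r−h)`, and hence
`|d_M − d_{M'}| ≤ (h/(r−h))·min{d_M, d_{M'}}` when these are finite. -/
theorem intrinsicDist_both_projections {d : ℕ}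
    (M M' : Set (EuclideanSpace ℝ (Fin d))) (hM : M.Nonempty) (hM' : M'.Nonempty)
    (h r : ℝ) (hh : 0 < h) (hhr : h < r)
    (hMM' : ∀ x ∈ M, Metric.infDist x M' ≤ h)
    (hM'M : ∀ x ∈ M', Metric.infDist x M ≤ h)
    (P P' : EuclideanSpace ℝ (Fin d) → EuclideanSpace ℝ (Fin d))
    (hPmaps : MapsTo P {z | Metric.infDist z M ≤ h} M)
    (hPlip : ∀ x ∈ {z | Metric.infDist z M ≤ h}, ∀ y ∈ {z | Metric.infDist z M ≤ h},
      dist (P x) (P y) ≤ r / (r - h) * dist x y)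
    (hPid : EqOn P id M)
    (hP'maps : MapsTo P' {z | Metric.infDist z M' ≤ h} M')
    (hP'lip : ∀ x ∈ {z | Metric.infDist z M' ≤ h}, ∀ y ∈ {z | Metric.infDist z M' ≤ h},
      dist (P' x) (P' y) ≤ r / (r - h) * dist x y)
    (hP'id : EqOn P' id M') :
    ∀ x ∈ M ∩ M', ∀ x' ∈ M ∩ M',
      intrinsicDist M' x x' ≤ ENNReal.ofReal (r / (r - h)) * intrinsicDist M x x' ∧
      intrinsicDist M x x' ≤ ENNReal.ofReal (r / (r - h)) * intrinsicDist M' x x' ∧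
      (intrinsicDist M x x' ≠ ⊤ → intrinsicDist M' x x' ≠ ⊤ →
        |(intrinsicDist M x x').toReal - (intrinsicDist M' x x').toReal|
          ≤ h / (r - h) * min (intrinsicDist M x x').toReal (intrinsicDist M' x x').toReal) := by
  have hrh : (0:ℝ) < r - h := sub_pos.2 hhr
  have hC0 : (0:ℝ) < r / (r - h) := div_pos (hh.trans hhr) hrh
  set K : ℝ≥0 := (r / (r - h)).toNNReal with hKdef
  have hKne : K ≠ 0 := (Real.toNNReal_pos.2 hC0).ne'
  have hKcoe : (K : ℝ) = r / (r - h) := Real.coe_toNNReal _ hC0.le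
  have hKE : ENNReal.ofReal (r / (r - h)) = (K : ℝ≥0∞) := rfl
  have hlipP : LipschitzOnWith K P {z | Metric.infDist z M ≤ h} := by
    rw [lipschitzOnWith_iff_dist_le_mul]
    intro a ha b hb; rw [hKcoe]; exact hPlip a ha b hb
  have hlipP' : LipschitzOnWith K P' {z | Metric.infDist z M' ≤ h} := by
    rw [lipschitzOnWith_iff_dist_le_mul]
    intro a ha b hb; rw [hKcoe]; exact hP'lip a ha b hb
  have hMsub : M ⊆ {z | Metric.infDist z M' ≤ h} := fun z hz => hMM' z hz
  have hM'sub : M' ⊆ {z | Metric.infDist z M ≤ h} := fun z hz => hM'M z hz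
  intro x hx x' hx'
  have hmapP' : MapsTo P' M M' := fun z hz => hP'maps (hMsub hz)
  have hmapP : MapsTo P M' M := fun z hz => hPmaps (hM'sub hz)
  have h1 : intrinsicDist M' x x' ≤ (K : ℝ≥0∞) * intrinsicDist M x x' :=
    intrinsicDist_le_of_retract hKne hlipP' hMsub hmapP' (hP'id hx.2) (hP'id hx'.2)
  have h2 : intrinsicDist M x x' ≤ (K : ℝ≥0∞) * intrinsicDist M' x x' :=
    intrinsicDist_le_of_retract hKne hlipP hM'sub hmapP (hPid hx.1) (hPid hx'.1)
  refine ⟨by rw [hKE]; exact h1, by rw [hKE]; exact h2, ?_⟩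
  intro hfin hfin'
  set a := (intrinsicDist M x x').toReal
  set b := (intrinsicDist M' x x').toReal
  have ha0 : 0 ≤ a := ENNReal.toReal_nonneg
  have hb0 : 0 ≤ b := ENNReal.toReal_nonneg
  have hr1 : b ≤ r / (r - h) * a := by
    have := ENNReal.toReal_mono (ENNReal.mul_ne_top ENNReal.coe_ne_top hfin) h1
    rwa [ENNReal.toReal_mul, ENNReal.coe_toReal, hKcoe] at this
  have hr2 : a ≤ r / (r - h) * b := by
    have := ENNReal.toReal_mono (ENNReal.mul_ne_top ENNReal.coe_ne_top hfin') h2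
    rwa [ENNReal.toReal_mul, ENNReal.coe_toReal, hKcoe] at this
  have hCe : r / (r - h) = 1 + h / (r - h) := by field_simp; ring
  rw [hCe] at hr1 hr2
  rcases le_total a b with hab | hab
  · rw [min_eq_left hab, abs_of_nonpos (by linarith)]
    nlinarith
  · rw [min_eq_right hab, abs_of_nonneg (by linarith)]
    nlinarith
end

section
/- Let T and T' be affine subspaces of ℝ^d with direction (linear) subspaces U and V respectively, and suppose T ∩ T' ≠ ∅. Then for every x ∈ ℝ^d, |dist(x,T) − dist(x,T')| ≤ ‖P_U − P_V‖ · dist(x, T ∩ T'), where P_U and P_V denote the orthogonal projections of ℝ^d onto U and V and ‖·‖ is the operator norm. -/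
open Set

lemma infDist_affine_eq_norm {d : ℕ} (S : AffineSubspace ℝ (EuclideanSpace ℝ (Fin d)))
    (z : EuclideanSpace ℝ (Fin d)) (hz : z ∈ S) (x : EuclideanSpace ℝ (Fin d)) :
    Metric.infDist x (S : Set (EuclideanSpace ℝ (Fin d))) =
      ‖(x - z) - (Submodule.orthogonalProjectionOnto S.direction (x - z) : EuclideanSpace ℝ (Fin d))‖ := by
  have hset : (S.direction : Set (EuclideanSpace ℝ (Fin d))) = (· -ᵥ z) '' S :=
    AffineSubspace.coe_direction_eq_vsub_set_right hz
  have hiso : Isometry (fun p : EuclideanSpace ℝ (Fin d) => p -ᵥ z) :=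
    (IsometryEquiv.vaddConst z).symm.isometry
  have h1 : Metric.infDist (x - z) (S.direction : Set (EuclideanSpace ℝ (Fin d))) =
      Metric.infDist x (S : Set (EuclideanSpace ℝ (Fin d))) := by
    rw [hset]
    have := Metric.infDist_image (t := (S : Set (EuclideanSpace ℝ (Fin d)))) (x := x) hiso
    simpa using this
  rw [← h1, ← Submodule.starProjection_apply, Submodule.starProjection_minimal, Metric.infDist_eq_iInf]
  simp only [dist_eq_norm]
  rfl

/-- For affine subspaces `T, T'` of `ℝ^d` with directions `U, V` and
`T ∩ T' ≠ ∅`, for every `x`: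
`|dist(x,T) − dist(x,T')| ≤ ‖P_U − P_V‖ · dist(x, T ∩ T')`,
where `P_U, P_V` are the orthogonal projections onto `U, V` (as maps `ℝ^d → ℝ^d`). -/
theorem infDist_affine_sub_le {d : ℕ}
    (T T' : AffineSubspace ℝ (EuclideanSpace ℝ (Fin d)))
    (hTT' : ((T : Set (EuclideanSpace ℝ (Fin d))) ∩
      (T' : Set (EuclideanSpace ℝ (Fin d)))).Nonempty)
    (x : EuclideanSpace ℝ (Fin d)) :
    |Metric.infDist x (T : Set (EuclideanSpace ℝ (Fin d))) -
        Metric.infDist x (T' : Set (EuclideanSpace ℝ (Fin d)))| ≤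
      ‖(T.direction.subtypeL.comp (Submodule.orthogonalProjectionOnto T.direction)) -
        (T'.direction.subtypeL.comp (Submodule.orthogonalProjectionOnto T'.direction))‖ *
      Metric.infDist x ((T : Set (EuclideanSpace ℝ (Fin d))) ∩
        (T' : Set (EuclideanSpace ℝ (Fin d)))) := by
  -- the intersection is closed, so infDist is attained
  have hTc : IsClosed (T : Set (EuclideanSpace ℝ (Fin d))) := by
    rw [← T.isClosed_direction_iff]
    exact T.direction.closed_of_finiteDimensional
  have hT'c : IsClosed (T' : Set (EuclideanSpace ℝ (Fin d))) := by
    rw [← T'.isClosed_direction_iff]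
    exact T'.direction.closed_of_finiteDimensional
  obtain ⟨z, ⟨hzT, hzT'⟩, hzd⟩ :=
    (hTc.inter hT'c).exists_infDist_eq_dist hTT' x
  set a := x - z with ha
  set P := T.direction.subtypeL.comp (Submodule.orthogonalProjectionOnto T.direction)
  set Q := T'.direction.subtypeL.comp (Submodule.orthogonalProjectionOnto T'.direction)
  have h1 := infDist_affine_eq_norm T z hzT x
  have h2 := infDist_affine_eq_norm T' z hzT' x
  rw [hzd, h1, h2]
  have key : |‖a - (Submodule.orthogonalProjectionOnto T.direction a : EuclideanSpace ℝ (Fin d))‖ -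
      ‖a - (Submodule.orthogonalProjectionOnto T'.direction a : EuclideanSpace ℝ (Fin d))‖| ≤
      ‖(P - Q) a‖ := by
    have := abs_norm_sub_norm_le
      (a - (Submodule.orthogonalProjectionOnto T.direction a : EuclideanSpace ℝ (Fin d)))
      (a - (Submodule.orthogonalProjectionOnto T'.direction a : EuclideanSpace ℝ (Fin d)))
    refine this.trans (le_of_eq ?_)
    rw [show (a - (Submodule.orthogonalProjectionOnto T.direction a : EuclideanSpace ℝ (Fin d))) -
        (a - (Submodule.orthogonalProjectionOnto T'.direction a : EuclideanSpace ℝ (Fin d))) =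
        -((P - Q) a) by simp [P, Q], norm_neg]
  refine key.trans ?_
  calc ‖(P - Q) a‖ ≤ ‖P - Q‖ * ‖a‖ := (P - Q).le_opNorm a
    _ = ‖P - Q‖ * dist x z := by rw [ha, dist_eq_norm]
end

section
/- There exist η₀ > 0 depending only on k, and C₂ ≥ 1 depending only on k and C₁, such that the following holds. If 0 < η ≤ η₀ and u₁, …, u_N ∈ B̄ form an (η, 1/C₁)-net of B̄, then the matrix Σ := (1/N) Σ_{j=1}^N u_j u_jᵀ satisfies ‖v‖²/C₂ ≤ ⟨Σ v, v⟩ ≤ C₂‖v‖² for every v ∈ ℝ^k; that is, (1/C₂)·I ≼ Σ ≼ C₂·I in the Loewner order. -/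
open Set Finset

open MeasureTheory Metric in
set_option maxHeartbeats 1000000 in
/-- There is `η₀ > 0` depending only on `k` such that for any `C₁ ≥ 1` there is
`C₂ ≥ 1` (depending only on `k` and `C₁`) with: whenever `0 < η ≤ η₀` and `u₁, …, u_N` form an
`(η, 1/C₁)`-net of the closed unit ball `B̄` of `ℝ^k`, the matrix `Σ = (1/N)·Σ_j u_j u_jᵀ`
satisfies `(1/C₂)·I ≼ Σ ≼ C₂·I`, i.e.
`‖v‖²/C₂ ≤ ⟨Σv, v⟩ = (1/N)·Σ_j ⟨u_j, v⟩² ≤ C₂·‖v‖²` for every `v`. -/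
theorem net_covariance_bounds (k : ℕ) (hk : 0 < k) :
    ∃ η₀ > (0 : ℝ), ∀ C₁ : ℝ, 1 ≤ C₁ → ∃ C₂ ≥ (1 : ℝ),
      ∀ (η : ℝ), 0 < η → η ≤ η₀ →
      ∀ (N : ℕ) (u : Fin N → EuclideanSpace ℝ (Fin k)),
        (∀ j, u j ∈ Metric.closedBall (0 : EuclideanSpace ℝ (Fin k)) 1) →
        (∀ y ∈ Metric.closedBall (0 : EuclideanSpace ℝ (Fin k)) 1, ∃ j, ‖y - u j‖ ≤ η) →
        (∀ j l, j ≠ l → η / C₁ ≤ ‖u j - u l‖) →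
        ∀ v : EuclideanSpace ℝ (Fin k),
          ‖v‖ ^ 2 / C₂ ≤ (1 / N) * ∑ j, (inner ℝ (u j) v : ℝ) ^ 2 ∧
          (1 / N) * ∑ j, (inner ℝ (u j) v : ℝ) ^ 2 ≤ C₂ * ‖v‖ ^ 2 := by
  classical
  refine ⟨1/4, by norm_num, fun C₁ hC₁ => ?_⟩
  have hC₁0 : (0:ℝ) < C₁ := by linarith
  have hP1 : (1:ℝ) ≤ (96*C₁)^k := one_le_pow₀ (by linarith)
  refine ⟨4 * (96*C₁)^k, by nlinarith, ?_⟩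
  intro η hη hη4 N u hub hcov hsep v
  set C₂ : ℝ := 4 * (96*C₁)^k with hC₂def
  have hC₂pos : 0 < C₂ := by positivity
  -- N is positive
  obtain ⟨j₀, _⟩ := hcov 0 (by simp)
  have hN : 0 < N := j₀.pos
  have hN0 : (0:ℝ) < (N:ℝ) := by exact_mod_cast hN
  -- basic measure facts
  set μB := volume (closedBall (0 : EuclideanSpace ℝ (Fin k)) 1) with hμB
  have hμBpos : 0 < μB := measure_closedBall_pos volume _ one_pos
  have hμBfin : μB ≠ ⊤ := measure_closedBall_lt_top.ne
  have hvol : ∀ (x : EuclideanSpace ℝ (Fin k)) (r : ℝ), 0 ≤ r →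
      volume (closedBall x r) = ENNReal.ofReal (r ^ k) * μB := by
    intro x r hr
    rw [hμB, Measure.addHaar_closedBall' volume x hr, finrank_euclideanSpace_fin]
  -- Packing bound : N * (η/(3C₁))^k ≤ 2^k
  have hr0 : (0:ℝ) < η/(3*C₁) := by positivity
  have hpack : (N:ℝ) * (η/(3*C₁))^k ≤ 2^k := by
    have hdisj : ((Finset.univ : Finset (Fin N)) : Set (Fin N)).PairwiseDisjoint
        (fun j => closedBall (u j) (η/(3*C₁))) := by
      intro a _ b _ hab
      apply closedBall_disjoint_closedBall
      have := hsep a b hab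
      rw [dist_eq_norm]
      have : η / C₁ ≤ ‖u a - u b‖ := this
      have h3 : η/(3*C₁) + η/(3*C₁) < η/C₁ := by
        rw [← add_div, div_lt_div_iff₀ (by positivity) hC₁0]
        ring_nf; nlinarith
      linarith
    have hsub : (⋃ j ∈ (Finset.univ : Finset (Fin N)), closedBall (u j) (η/(3*C₁)))
        ⊆ closedBall (0 : EuclideanSpace ℝ (Fin k)) 2 := by
      intro x hx
      simp only [Finset.mem_coe, Set.mem_iUnion] at hx
      obtain ⟨j, _, hj⟩ := hx
      rw [mem_closedBall] at hj ⊢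
      have h1 : dist (u j) 0 ≤ 1 := mem_closedBall.mp (hub j)
      have h2 : η/(3*C₁) ≤ 1 := by
        rw [div_le_one (by positivity)]; nlinarith
      calc dist x 0 ≤ dist x (u j) + dist (u j) 0 := dist_triangle _ _ _
        _ ≤ 2 := by linarith
    have hμ : (N : ENNReal) * (ENNReal.ofReal ((η/(3*C₁))^k) * μB)
        ≤ ENNReal.ofReal (2^k) * μB := by
      calc (N : ENNReal) * (ENNReal.ofReal ((η/(3*C₁))^k) * μB)
          = ∑ j : Fin N, volume (closedBall (u j) (η/(3*C₁))) := by
            rw [Finset.sum_congr rfl (fun j _ => hvol (u j) _ hr0.le)]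
            simp [Finset.card_univ, mul_comm]
        _ = volume (⋃ j ∈ (Finset.univ : Finset (Fin N)), closedBall (u j) (η/(3*C₁))) :=
            (measure_biUnion_finset hdisj (fun j _ => measurableSet_closedBall)).symm
        _ ≤ volume (closedBall (0 : EuclideanSpace ℝ (Fin k)) 2) := measure_mono hsub
        _ = ENNReal.ofReal (2^k) * μB := hvol 0 2 (by norm_num)
    rw [← mul_assoc] at hμ
    have hμ' := (ENNReal.mul_le_mul_iff_left hμBpos.ne' hμBfin).mp hμ
    rw [← ENNReal.ofReal_natCast, ← ENNReal.ofReal_mul (by positivity)] at hμ'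
    exact (ENNReal.ofReal_le_ofReal_iff (by positivity)).mp hμ'
  -- core claim for unit vectors
  have key : ∀ w : EuclideanSpace ℝ (Fin k), ‖w‖ = 1 → (N:ℝ) ≤ C₂ * ∑ j, (inner ℝ (u j) w : ℝ)^2 := by
    intro w hw
    set T : ℝ := ∑ j, (inner ℝ (u j) w : ℝ)^2 with hT
    set S : Finset (Fin N) := Finset.univ.filter (fun j => (1/2:ℝ) ≤ inner ℝ (u j) w) with hS
    -- covering of a small ball by balls around points of S
    have hcover : closedBall ((7/8:ℝ) • w) (1/16) ⊆ ⋃ j ∈ S, closedBall (u j) η := by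
      intro y hy
      rw [mem_closedBall_iff_norm] at hy
      have hyball : y ∈ closedBall (0 : EuclideanSpace ℝ (Fin k)) 1 := by
        rw [mem_closedBall_zero_iff]
        have hyd : y = (y - (7/8:ℝ) • w) + (7/8:ℝ) • w := by abel
        have : ‖y‖ ≤ ‖y - (7/8:ℝ) • w‖ + ‖(7/8:ℝ) • w‖ := by
          conv_lhs => rw [hyd]
          exact norm_add_le _ _
        rw [norm_smul, hw] at this
        simp only [Real.norm_eq_abs] at this
        rw [abs_of_nonneg (by norm_num : (0:ℝ) ≤ 7/8)] at this
        linarith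
      obtain ⟨j, hj⟩ := hcov y hyball
      have hjS : j ∈ S := by
        rw [hS, Finset.mem_filter]
        refine ⟨Finset.mem_univ _, ?_⟩
        have hdec : u j = (7/8:ℝ) • w + (y - (7/8:ℝ) • w) - (y - u j) := by abel
        have h1 : |(inner ℝ (y - (7/8:ℝ) • w) w : ℝ)| ≤ 1/16 := by
          calc |(inner ℝ (y - (7/8:ℝ) • w) w : ℝ)| ≤ ‖y - (7/8:ℝ) • w‖ * ‖w‖ :=
              abs_real_inner_le_norm _ _
            _ ≤ 1/16 := by rw [hw, mul_one]; exact hy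
        have h2 : |(inner ℝ (y - u j) w : ℝ)| ≤ η := by
          calc |(inner ℝ (y - u j) w : ℝ)| ≤ ‖y - u j‖ * ‖w‖ := abs_real_inner_le_norm _ _
            _ ≤ η := by rw [hw, mul_one]; exact hj
        have h3 : (inner ℝ ((7/8:ℝ) • w) w : ℝ) = 7/8 := by
          rw [real_inner_smul_left, real_inner_self_eq_norm_sq, hw]; norm_num
        have h4 : (inner ℝ (u j) w : ℝ)
            = inner ℝ ((7/8:ℝ) • w) w + inner ℝ (y - (7/8:ℝ) • w) w - inner ℝ (y - u j) w := by
          conv_lhs => rw [hdec]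
          rw [inner_sub_left, inner_add_left]
        rw [h4, h3]
        have := abs_le.mp h1
        have := abs_le.mp h2
        linarith
      exact Set.mem_biUnion hjS (by rw [mem_closedBall_iff_norm]; exact hj)
    -- measure comparison : (1/16)^k ≤ |S| * η^k
    have hcount : ((1:ℝ)/16)^k ≤ (S.card : ℝ) * η^k := by
      have hμ : ENNReal.ofReal (((1:ℝ)/16)^k) * μB
          ≤ (S.card : ENNReal) * (ENNReal.ofReal (η^k) * μB) := by
        calc ENNReal.ofReal (((1:ℝ)/16)^k) * μB
            = volume (closedBall ((7/8:ℝ) • w) (1/16)) := (hvol _ _ (by norm_num)).symm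
          _ ≤ volume (⋃ j ∈ S, closedBall (u j) η) := measure_mono hcover
          _ ≤ ∑ j ∈ S, volume (closedBall (u j) η) := measure_biUnion_finset_le _ _
          _ = (S.card : ENNReal) * (ENNReal.ofReal (η^k) * μB) := by
              rw [Finset.sum_congr rfl (fun j _ => hvol (u j) _ hη.le), Finset.sum_const,
                nsmul_eq_mul]
      rw [← mul_assoc] at hμ
      have hμ' := (ENNReal.mul_le_mul_iff_left hμBpos.ne' hμBfin).mp hμ
      rw [← ENNReal.ofReal_natCast, ← ENNReal.ofReal_mul (by positivity)] at hμ'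
      exact (ENNReal.ofReal_le_ofReal_iff (by positivity)).mp hμ'
    -- sum lower bound : |S|/4 ≤ T
    have hsum : (S.card : ℝ) * (1/4) ≤ T := by
      calc (S.card : ℝ) * (1/4) = ∑ _j ∈ S, (1/4:ℝ) := by
            rw [Finset.sum_const, nsmul_eq_mul]
        _ ≤ ∑ j ∈ S, (inner ℝ (u j) w : ℝ)^2 := by
            apply Finset.sum_le_sum
            intro j hj
            rw [hS, Finset.mem_filter] at hj
            nlinarith [hj.2]
        _ ≤ T := Finset.sum_le_sum_of_subset_of_nonneg (Finset.subset_univ S)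
            (fun j _ _ => sq_nonneg _)
    have hT0 : 0 ≤ T := Finset.sum_nonneg fun j _ => sq_nonneg _
    -- combine
    have hNη : (N:ℝ) * η^k ≤ 2^k * (3*C₁)^k := by
      have h3C : (0:ℝ) < (3*C₁)^k := by positivity
      rw [div_pow] at hpack
      calc (N:ℝ) * η^k = ((N:ℝ) * (η^k / (3*C₁)^k)) * (3*C₁)^k := by
            field_simp
        _ ≤ 2^k * (3*C₁)^k := mul_le_mul_of_nonneg_right hpack h3C.le
    have step : (N:ℝ) * ((1:ℝ)/16)^k ≤ (4*T) * (2^k * (3*C₁)^k) := by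
      calc (N:ℝ) * ((1:ℝ)/16)^k ≤ (N:ℝ) * ((S.card : ℝ) * η^k) :=
            mul_le_mul_of_nonneg_left hcount hN0.le
        _ = (S.card : ℝ) * ((N:ℝ) * η^k) := by ring
        _ ≤ (4*T) * (2^k * (3*C₁)^k) := by
            apply mul_le_mul (by linarith) hNη (by positivity) (by linarith)
    have hfin : (N:ℝ) ≤ 4*T * (96*C₁)^k := by
      have h16 : ((1:ℝ)/16)^k * 16^k = 1 := by
        rw [← mul_pow]; norm_num
      have e1 : ((96:ℝ)*C₁)^k = 2^k * (3*C₁)^k * 16^k := by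
        rw [← mul_pow, ← mul_pow]; ring_nf
      have := mul_le_mul_of_nonneg_right step (by positivity : (0:ℝ) ≤ 16^k)
      calc (N:ℝ) = (N:ℝ) * (((1:ℝ)/16)^k * 16^k) := by rw [h16, mul_one]
        _ = (N:ℝ) * ((1:ℝ)/16)^k * 16^k := by ring
        _ ≤ (4*T) * (2^k * (3*C₁)^k) * 16^k := this
        _ = 4*T * (96*C₁)^k := by rw [e1]; ring
    calc (N:ℝ) ≤ 4*T * (96*C₁)^k := hfin
      _ = C₂ * T := by rw [hC₂def]; ring
  -- now finish for arbitrary v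
  constructor
  · -- lower bound
    rcases eq_or_ne v 0 with rfl | hv
    · simp only [norm_zero]
      have : (0:ℝ) ≤ (1 / N) * ∑ j, (inner ℝ (u j) (0:EuclideanSpace ℝ (Fin k)) : ℝ) ^ 2 := by
        apply mul_nonneg (by positivity)
        exact Finset.sum_nonneg fun j _ => sq_nonneg _
      simpa using this
    · set w : EuclideanSpace ℝ (Fin k) := ‖v‖⁻¹ • v with hwdef
      have hw : ‖w‖ = 1 := norm_smul_inv_norm hv
      have hvw : v = ‖v‖ • w := by
        rw [hwdef, smul_smul, mul_inv_cancel₀ (norm_ne_zero_iff.mpr hv), one_smul]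
      have hkey := key w hw
      set T : ℝ := ∑ j, (inner ℝ (u j) w : ℝ)^2 with hT
      have hsum : ∑ j, (inner ℝ (u j) v : ℝ)^2 = ‖v‖^2 * T := by
        rw [hT, Finset.mul_sum]
        apply Finset.sum_congr rfl
        intro j _
        conv_lhs => rw [hvw]
        rw [real_inner_smul_right, mul_pow]
      rw [hsum, div_le_iff₀ hC₂pos]
      have hT0 : 0 ≤ T := Finset.sum_nonneg fun j _ => sq_nonneg _
      have key1 : (1:ℝ) ≤ (1/N * T) * C₂ := by
        rw [one_div, inv_mul_eq_div, div_mul_eq_mul_div, le_div_iff₀ hN0]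
        linarith [hkey]
      nlinarith [sq_nonneg ‖v‖, key1]
  · -- upper bound
    have hterm : ∀ j : Fin N, (inner ℝ (u j) v : ℝ)^2 ≤ ‖v‖^2 := by
      intro j
      have h1 : |(inner ℝ (u j) v : ℝ)| ≤ ‖u j‖ * ‖v‖ := abs_real_inner_le_norm _ _
      have h2 : ‖u j‖ ≤ 1 := mem_closedBall_zero_iff.mp (hub j)
      have h3 : |(inner ℝ (u j) v : ℝ)| ≤ ‖v‖ :=
        h1.trans (mul_le_of_le_one_left (norm_nonneg v) h2)
      calc (inner ℝ (u j) v : ℝ)^2 = |(inner ℝ (u j) v : ℝ)|^2 := (sq_abs _).symm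
        _ ≤ ‖v‖^2 := pow_le_pow_left₀ (abs_nonneg _) h3 2
    have hsum : ∑ j, (inner ℝ (u j) v : ℝ)^2 ≤ (N:ℝ) * ‖v‖^2 := by
      calc ∑ j, (inner ℝ (u j) v : ℝ)^2 ≤ ∑ _j : Fin N, ‖v‖^2 :=
          Finset.sum_le_sum fun j _ => hterm j
        _ = (N:ℝ) * ‖v‖^2 := by rw [Finset.sum_const, nsmul_eq_mul, Finset.card_univ,
            Fintype.card_fin]
    have hsum0 : 0 ≤ ∑ j, (inner ℝ (u j) v : ℝ)^2 := Finset.sum_nonneg fun j _ => sq_nonneg _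
    have h1 : (1/N:ℝ) * ∑ j, (inner ℝ (u j) v : ℝ)^2 ≤ ‖v‖^2 := by
      rw [one_div, inv_mul_le_iff₀ hN0]
      linarith [hsum]
    nlinarith [sq_nonneg ‖v‖, h1]
end

section
/- For every A > 0 and every ε > 0, the arc length η of the graph of h over [0, ε] satisfies ε + C₁ε³ − C₂ε⁵ ≤ η ≤ ε + C₁ε³. -/
open Set intervalIntegral

/-- The tri-cube function `w(t) = (1 − |t|³)₊³`. -/
noncomputable def triCube (t : ℝ) : ℝ := (max (1 - |t| ^ 3) 0) ^ 3

noncomputable def triCube' (t : ℝ) : ℝ := -9 * t * |t| * (max (1 - |t| ^ 3) 0) ^ 2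

lemma absCube_hasDerivAt (s : ℝ) : HasDerivAt (fun x : ℝ => |x| ^ 3) (3 * s * |s|) s := by
  rcases eq_or_ne s 0 with rfl | hs
  · simp only [mul_zero, zero_mul, abs_zero]
    rw [hasDerivAt_iff_tendsto_slope]
    have hb : ∀ x : ℝ, ‖slope (fun x : ℝ => |x| ^ 3) 0 x‖ ≤ x ^ 2 := by
      intro x
      rcases eq_or_ne x 0 with rfl | hx
      · simp [slope]
      · have : slope (fun x : ℝ => |x| ^ 3) 0 x = |x| ^ 3 / x := by
          simp [slope, div_eq_inv_mul]
        rw [this, Real.norm_eq_abs, abs_div,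
          abs_of_nonneg (by positivity : (0:ℝ) ≤ |x| ^ 3), div_le_iff₀ (abs_pos.mpr hx)]
        nlinarith [sq_abs x, abs_nonneg x]
    have h2 : Filter.Tendsto (fun x : ℝ => x ^ 2) (nhdsWithin 0 {(0:ℝ)}ᶜ) (nhds 0) := by
      have := (continuous_pow 2).tendsto (0:ℝ)
      simpa using this.mono_left nhdsWithin_le_nhds
    exact squeeze_zero_norm hb h2
  · have h1 : HasDerivAt (fun x : ℝ => |x|) (SignType.sign s : ℝ) s := hasDerivAt_abs hs
    have h2 := h1.pow 3
    refine h2.congr_deriv ?_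
    symm
    rcases hs.lt_or_gt with h | h
    · simp [abs_of_neg h, sign_neg h]; ring
    · simp [abs_of_pos h, sign_pos h]; ring

lemma triCube_hasDerivAt (t : ℝ) : HasDerivAt triCube (triCube' t) t := by
  have hF : ∀ u : ℝ, max u 0 ^ 3 = (u ^ 3 + |u| ^ 3) / 2 := by
    intro u
    rcases le_or_gt 0 u with h | h
    · rw [max_eq_left h, abs_of_nonneg h]; ring
    · rw [max_eq_right h.le, abs_of_neg h]; ring
  have heq : triCube = fun t => ((1 - |t| ^ 3) ^ 3 + |1 - |t| ^ 3| ^ 3) / 2 := by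
    funext t; rw [triCube, hF]
  rw [heq]
  have hu : HasDerivAt (fun t : ℝ => 1 - |t| ^ 3) (-(3 * t * |t|)) t :=
    (absCube_hasDerivAt t).const_sub 1
  set u := 1 - |t| ^ 3 with hudef
  have h1 := hu.pow 3
  have h2 : HasDerivAt (fun t : ℝ => |1 - |t| ^ 3| ^ 3) ((3 * u * |u|) * (-(3 * t * |t|))) t :=
    by have h := (absCube_hasDerivAt u).comp t hu; exact h
  have hM : u ^ 2 + u * |u| = 2 * (max u 0) ^ 2 := by
    rcases le_or_gt 0 u with h | h
    · rw [max_eq_left h, abs_of_nonneg h]; ring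
    · rw [max_eq_right h.le, abs_of_neg h]; ring
  have := (h1.add h2).div_const 2
  refine this.congr_deriv ?_
  symm
  rw [triCube']
  push_cast
  linear_combination ((9:ℝ) * t * |t| / 2) * hM

lemma triCube'_continuous : Continuous triCube' := by
  unfold triCube'; fun_prop

lemma sqrt_upper (x : ℝ) : Real.sqrt (1 + x ^ 2) ≤ 1 + x ^ 2 / 2 := by
  have h0 : (0:ℝ) ≤ 1 + x ^ 2 := by positivity
  set s := Real.sqrt (1 + x ^ 2) with hs
  have hsq : s ^ 2 = 1 + x ^ 2 := Real.sq_sqrt h0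
  have hs0 : 0 ≤ s := Real.sqrt_nonneg _
  nlinarith [sq_nonneg (s - 1)]

lemma sqrt_lower (x : ℝ) : 1 + x ^ 2 / 2 - x ^ 4 / 8 ≤ Real.sqrt (1 + x ^ 2) := by
  have h0 : (0:ℝ) ≤ 1 + x ^ 2 := by positivity
  set s := Real.sqrt (1 + x ^ 2) with hs
  have hsq : s ^ 2 = 1 + x ^ 2 := Real.sq_sqrt h0
  have hs1 : 1 ≤ s := by
    nlinarith [Real.sqrt_nonneg (1 + x ^ 2), sq_nonneg x]
  have h1 : 0 ≤ s - 1 := by linarith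
  have h3 : (0:ℝ) ≤ s + 3 := by linarith
  have hx2 : x ^ 2 = s ^ 2 - 1 := by linarith
  nlinarith [mul_nonneg (mul_nonneg (mul_nonneg h1 h1) h1) h3, sq_nonneg x, hx2]

lemma deriv_triCube_eq : deriv triCube = triCube' :=
  funext fun t => (triCube_hasDerivAt t).deriv


/-- For every `A > 0` and `ε > 0`, the arc length
`η = ∫_0^ε √(1 + h'(t)²) dt` of the graph of `h(t) = A(ε/2)²·w(2t/ε − 1)` over `[0, ε]`
satisfies `ε + C₁ε³ − C₂ε⁵ ≤ η ≤ ε + C₁ε³`, where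
`C₁ = (A²/16)·∫_{−1}^1 w'(t)² dt` and `C₂ = (A⁴/256)·∫_{−1}^1 w'(t)⁴ dt`. -/
theorem arc_length_tricube_bump (A ε : ℝ) (hA : 0 < A) (hε : 0 < ε)
    (h : ℝ → ℝ) (hh : h = fun t => A * (ε / 2) ^ 2 * triCube (2 * t / ε - 1))
    (η : ℝ) (hη : η = ∫ t in (0 : ℝ)..ε, Real.sqrt (1 + (deriv h t) ^ 2))
    (C₁ : ℝ) (hC₁ : C₁ = A ^ 2 / 16 * ∫ t in (-1 : ℝ)..1, (deriv triCube t) ^ 2)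
    (C₂ : ℝ) (hC₂ : C₂ = A ^ 4 / 256 * ∫ t in (-1 : ℝ)..1, (deriv triCube t) ^ 4) :
    ε + C₁ * ε ^ 3 - C₂ * ε ^ 5 ≤ η ∧ η ≤ ε + C₁ * ε ^ 3 := by
  have hεne : ε ≠ 0 := hε.ne'
  set g : ℝ → ℝ := fun t => A * ε / 2 * triCube' (2 / ε * t - 1) with hg
  -- derivative of h
  have hder : ∀ t, HasDerivAt h (g t) t := by
    intro t
    have hin : HasDerivAt (fun t : ℝ => 2 * t / ε - 1) (2 / ε) t := by
      have := (((hasDerivAt_id t).const_mul 2).div_const ε).sub_const 1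
      simpa using this
    have hcomp := ((triCube_hasDerivAt (2 * t / ε - 1)).comp t hin).const_mul
      (A * (ε / 2) ^ 2)
    rw [hh]
    refine hcomp.congr_deriv ?_
    symm
    rw [hg]
    simp only
    rw [show 2 / ε * t - 1 = 2 * t / ε - 1 by ring]
    field_simp
  have hderiv : deriv h = g := funext fun t => (hder t).deriv
  -- continuity
  have hgc : Continuous g := by
    apply Continuous.mul continuous_const
    exact triCube'_continuous.comp (by fun_prop)
  -- substitution lemma
  have hsub : ∀ f : ℝ → ℝ, (∫ t in (0:ℝ)..ε, f (2 / ε * t - 1)) = (ε / 2) * ∫ s in (-1:ℝ)..1, f s := by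
    intro f
    have hc : (2:ℝ) / ε ≠ 0 := by positivity
    rw [intervalIntegral.integral_comp_mul_sub f hc 1]
    rw [show 2 / ε * 0 - 1 = (-1:ℝ) by ring, show 2 / ε * ε - 1 = (1:ℝ) by field_simp; norm_num]
    rw [smul_eq_mul]
    congr 1
    field_simp
  -- the two exact integral identities
  have key1 : (∫ t in (0:ℝ)..ε, (1 + (g t) ^ 2 / 2)) = ε + C₁ * ε ^ 3 := by
    rw [intervalIntegral.integral_add (Continuous.intervalIntegrable (by fun_prop) _ _) (Continuous.intervalIntegrable (by fun_prop) _ _)]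
    congr 1
    · simp
    · have : (fun t => (g t) ^ 2 / 2) = fun t => (A ^ 2 * ε ^ 2 / 8) * (fun s => triCube' s ^ 2) (2 / ε * t - 1) := by
        funext t; simp only [hg]; ring
      rw [this, intervalIntegral.integral_const_mul, hsub (fun s => triCube' s ^ 2), hC₁, deriv_triCube_eq]
      ring
  have key2 : (∫ t in (0:ℝ)..ε, (1 + (g t) ^ 2 / 2 - (g t) ^ 4 / 8)) = ε + C₁ * ε ^ 3 - C₂ * ε ^ 5 := by
    rw [intervalIntegral.integral_sub (Continuous.intervalIntegrable (by fun_prop) _ _) (Continuous.intervalIntegrable (by fun_prop) _ _)]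
    rw [key1]
    congr 1
    have : (fun t => (g t) ^ 4 / 8) = fun t => (A ^ 4 * ε ^ 4 / 128) * (fun s => triCube' s ^ 4) (2 / ε * t - 1) := by
      funext t; simp only [hg]; ring
    rw [this, intervalIntegral.integral_const_mul, hsub (fun s => triCube' s ^ 4), hC₂, deriv_triCube_eq]
    ring
  rw [hη, hderiv]
  have hint : IntervalIntegrable (fun t => Real.sqrt (1 + (g t) ^ 2)) MeasureTheory.volume 0 ε := by
    apply Continuous.intervalIntegrable
    exact Real.continuous_sqrt.comp (by fun_prop)
  constructor
  · rw [← key2]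
    apply intervalIntegral.integral_mono_on hε.le (Continuous.intervalIntegrable (by fun_prop) _ _) hint
    intro t _
    exact sqrt_lower (g t)
  · rw [← key1]
    apply intervalIntegral.integral_mono_on hε.le hint (Continuous.intervalIntegrable (by fun_prop) _ _)
    intro t _
    exact sqrt_upper (g t)
end

section
/- Let g : [a,b] → ℝ be continuous and let G := {(t, g(t)) : t ∈ [a,b]} ⊆ ℝ². Then for all a ≤ s ≤ t ≤ b, the intrinsic distance on G between (s, g(s)) and (t, g(t)) equals the length Λ of the curve τ ↦ (τ, g(τ)) restricted to [s,t] (an equality in [0,∞]). -/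
open Set
open scoped ENNReal

/-- The point `(x, y) ∈ ℝ²` (as `EuclideanSpace ℝ (Fin 2)`). -/
noncomputable def pt2 (x y : ℝ) : EuclideanSpace ℝ (Fin 2) :=
  (WithLp.equiv 2 (Fin 2 → ℝ)).symm ![x, y]

lemma pt2_apply_zero (x y : ℝ) : pt2 x y 0 = x := by simp [pt2]

lemma continuous_pt2 : Continuous fun p : ℝ × ℝ => pt2 p.1 p.2 := by
  apply (PiLp.continuous_toLp (p := 2) (β := fun _ : Fin 2 => ℝ)).comp
  exact continuous_pi fun i => by fin_cases i <;> dsimp <;> fun_prop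

lemma continuous_proj0 : Continuous fun v : EuclideanSpace ℝ (Fin 2) => v 0 :=
  (continuous_apply 0).comp (PiLp.continuous_ofLp (p := 2) (β := fun _ : Fin 2 => ℝ))

/-- For `g : [a,b] → ℝ` continuous with graph `G ⊆ ℝ²`, the intrinsic
distance on `G` between `(s, g(s))` and `(t, g(t))` (for `a ≤ s ≤ t ≤ b`) equals the length of
the curve `τ ↦ (τ, g(τ))` over `[s, t]` (an equality in `[0,∞]`). -/
theorem intrinsicDist_graph (a b : ℝ) (g : ℝ → ℝ) (hg : ContinuousOn g (Icc a b))
    (s t : ℝ) (has : a ≤ s) (hst : s ≤ t) (htb : t ≤ b) :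
    intrinsicDist ((fun τ => pt2 τ (g τ)) '' Icc a b) (pt2 s (g s)) (pt2 t (g t)) =
      eVariationOn (fun τ => pt2 τ (g τ)) (Icc s t) := by
  set c : ℝ → EuclideanSpace ℝ (Fin 2) := fun τ => pt2 τ (g τ) with hcdef
  show intrinsicDist (c '' Icc a b) (c s) (c t) = eVariationOn c (Icc s t)
  have hsub : Icc s t ⊆ Icc a b := Icc_subset_Icc has htb
  have hccont : ContinuousOn c (Icc a b) := by
    have : ContinuousOn (fun τ : ℝ => (τ, g τ)) (Icc a b) :=
      continuousOn_id.prodMk hg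
    exact continuous_pt2.comp_continuousOn this
  have hs_mem : s ∈ Icc a b := ⟨has, hst.trans htb⟩
  have ht_mem : t ∈ Icc a b := ⟨has.trans hst, htb⟩
  apply le_antisymm
  · -- ≤ : use the curve c ∘ φ with φ the affine parametrization of [s,t]
    set φ : ℝ → ℝ := fun u => s + u * (t - s) with hφdef
    have hφcont : Continuous φ := by fun_prop
    have hφ0 : φ 0 = s := by simp [hφdef]
    have hφ1 : φ 1 = t := by simp [hφdef]
    have hφm : MonotoneOn φ (Icc 0 1) := by
      intro x _ y _ hxy
      have : x * (t - s) ≤ y * (t - s) :=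
        mul_le_mul_of_nonneg_right hxy (by linarith)
      simpa [hφdef] using this
    have hφmaps : MapsTo φ (Icc 0 1) (Icc s t) := by
      intro u hu
      have h1 : (0:ℝ) ≤ u := hu.1
      have h2 : u ≤ 1 := hu.2
      constructor
      · show s ≤ s + u * (t - s); nlinarith
      · show s + u * (t - s) ≤ t; nlinarith
    have hφsurj : SurjOn φ (Icc 0 1) (Icc s t) := by
      have := intermediate_value_Icc (zero_le_one) hφcont.continuousOn
      rwa [hφ0, hφ1] at this
    have himg : φ '' Icc 0 1 = Icc s t :=
      Subset.antisymm (image_subset_iff.2 hφmaps) hφsurj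
    have key : eVariationOn (c ∘ φ) (Icc 0 1) = eVariationOn c (Icc s t) := by
      rw [eVariationOn.comp_eq_of_monotoneOn c φ hφm, himg]
    apply sInf_le
    refine ⟨c ∘ φ, ?_, ?_, ?_, ?_, key.symm⟩
    · exact hccont.comp hφcont.continuousOn fun u hu => hsub (hφmaps hu)
    · exact fun u hu => mem_image_of_mem c (hsub (hφmaps hu))
    · simp [Function.comp, hφ0]
    · simp [Function.comp, hφ1]
  · -- ≥ : every admissible curve is at least as long
    apply le_sInf
    rintro L ⟨γ, hγc, hγm, hγ0, hγ1, rfl⟩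
    set h : ℝ → ℝ := fun u => γ u 0 with hhdef
    have hγeq : ∀ u ∈ Icc (0:ℝ) 1, γ u = c (h u) ∧ h u ∈ Icc a b := by
      intro u hu
      obtain ⟨τ, hτ, hγu⟩ := hγm hu
      have hτ' : h u = τ := by
        simp only [hhdef, ← hγu]
        exact pt2_apply_zero τ (g τ)
      rw [hτ']
      exact ⟨hγu.symm, hτ⟩
    have hhc : ContinuousOn h (Icc 0 1) := continuous_proj0.comp_continuousOn hγc
    have hh0 : h 0 = s := by
      simp only [hhdef, hγ0]; exact pt2_apply_zero s (g s)
    have hh1 : h 1 = t := by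
      simp only [hhdef, hγ1]; exact pt2_apply_zero t (g t)
    refine iSup_le ?_
    rintro ⟨n, u, hu, us⟩
    dsimp only
    -- build a monotone sequence v in [0,1] with h (v i) = u i
    have base : ∃ x, x ∈ Icc (0:ℝ) 1 ∧ h x = u 0 := by
      have hiv := intermediate_value_Icc (zero_le_one) hhc
      rw [hh0, hh1] at hiv
      obtain ⟨x, hx, hx'⟩ := hiv (us 0)
      exact ⟨x, hx, hx'⟩
    have step : ∀ (i : ℕ) (x : ℝ), ∃ y,
        (x ∈ Icc (0:ℝ) 1 ∧ h x = u i) →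
          ((y ∈ Icc (0:ℝ) 1 ∧ h y = u (i + 1)) ∧ x ≤ y) := by
      intro i x
      by_cases hx : x ∈ Icc (0:ℝ) 1 ∧ h x = u i
      · have hx1 : x ≤ 1 := hx.1.2
        have hiv := intermediate_value_Icc hx1 (hhc.mono (Icc_subset_Icc hx.1.1 le_rfl))
        rw [hh1, hx.2] at hiv
        have hmem : u (i + 1) ∈ Icc (u i) t := ⟨hu (Nat.le_succ i), (us (i + 1)).2⟩
        obtain ⟨y, hy, hy'⟩ := hiv hmem
        exact ⟨y, fun _ => ⟨⟨⟨hx.1.1.trans hy.1, hy.2⟩, hy'⟩, hy.1⟩⟩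
      · exact ⟨x, fun hx' => absurd hx' hx⟩
    choose f hf using step
    set v : ℕ → ℝ := fun n => Nat.rec base.choose (fun i xi => f i xi) n with hvdef
    have hvsucc : ∀ i, v (i + 1) = f i (v i) := fun i => rfl
    have hvprop : ∀ i, v i ∈ Icc (0:ℝ) 1 ∧ h (v i) = u i := by
      intro i
      induction i with
      | zero => exact base.choose_spec
      | succ i ih => rw [hvsucc]; exact (hf i (v i) ih).1
    have hvmono : Monotone v := by
      apply monotone_nat_of_le_succ
      intro i
      rw [hvsucc]
      exact (hf i (v i) (hvprop i)).2
    have heach : ∀ i, γ (v i) = c (u i) := by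
      intro i
      rw [(hγeq (v i) (hvprop i).1).1, (hvprop i).2]
    calc ∑ i ∈ Finset.range n, edist (c (u (i + 1))) (c (u i))
        = ∑ i ∈ Finset.range n, edist (γ (v (i + 1))) (γ (v i)) := by
          refine Finset.sum_congr rfl fun i _ => ?_
          rw [heach (i + 1), heach i]
      _ ≤ eVariationOn γ (Icc 0 1) :=
          eVariationOn.sum_le (f := γ) (n := n) hvmono fun i => (hvprop i).1
end

section
/- Let k, m be positive integers, and for each multi-index i = (i₁,…,i_k) ∈ {1,…,m}^k let u_i := (i₁,…,i_k) ∈ ℝ^k and v_i := (α₁i₁, …, α_k i_k) ∈ ℝ^k, where α₁,…,α_k ≥ 0 are fixed nonnegative real numbers. Let ū and v̄ denote the barycenters of (u_i) and (v_i). Then for every orthogonal linear map R : ℝ^k → ℝ^k and every t ∈ ℝ^k, Σ_{i ∈ {1,…,m}^k} ‖v_i − t − R(u_i)‖² ≥ Σ_{i ∈ {1,…,m}^k} ‖v_i − (v̄ − ū) − u_i‖²; that is, the best rigid alignment of the point set (u_i) to the point set (v_i) is achieved by the identity rotation together with the translation v̄ − ū. -/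
open Set Finset

lemma pi_sum_prod {k m : ℕ} (h : Fin k → Fin m → ℝ) :
    ∑ i : Fin k → Fin m, ∏ r, h r (i r) = ∏ r, ∑ j, h r j := by
  rw [Finset.prod_univ_sum]
  rw [Fintype.piFinset_univ]

lemma prod_if_const {k : ℕ} (p : Fin k) (A B : ℝ) :
    (∏ r : Fin k, if r = p then A else B) = A * B ^ (k - 1) := by
  rw [← Finset.mul_prod_erase Finset.univ _ (Finset.mem_univ p), if_pos rfl]
  rw [Finset.prod_congr rfl (fun r hr => if_neg (Finset.ne_of_mem_erase hr)),
    Finset.prod_const, Finset.card_erase_of_mem (Finset.mem_univ p), Finset.card_univ,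
    Fintype.card_fin]

lemma sum_eval {k m : ℕ} (f : Fin m → ℝ) (p : Fin k) :
    ∑ i : Fin k → Fin m, f (i p) = (m : ℝ) ^ (k - 1) * ∑ j, f j := by
  have h1 : ∀ i : Fin k → Fin m, f (i p) = ∏ r, (fun r x => if r = p then f x else 1) r (i r) := by
    intro i
    simp only []
    rw [Finset.prod_ite_eq' Finset.univ p (fun r => f (i r)), if_pos (Finset.mem_univ p)]
  rw [Finset.sum_congr rfl fun i _ => h1 i,
    pi_sum_prod (fun r x => if r = p then f x else 1)]
  calc ∏ r : Fin k, ∑ j, (if r = p then f j else 1)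
      = ∏ r : Fin k, (if r = p then ∑ j, f j else (m : ℝ)) := by
        refine Finset.prod_congr rfl fun r _ => ?_
        split <;> simp
    _ = (∑ j, f j) * (m : ℝ) ^ (k - 1) := prod_if_const p _ _
    _ = _ := mul_comm _ _

lemma sum_eval2 {k m : ℕ} (f g : Fin m → ℝ) (p q : Fin k) (hpq : p ≠ q)
    (hf : ∑ j, f j = 0) :
    ∑ i : Fin k → Fin m, f (i p) * g (i q) = 0 := by
  have h1 : ∀ i : Fin k → Fin m,
      f (i p) * g (i q)
        = ∏ r, (fun r x => if r = p then f x else if r = q then g x else 1) r (i r) := by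
    intro i
    simp only []
    rw [← Finset.mul_prod_erase Finset.univ _ (Finset.mem_univ p), if_pos rfl]
    rw [← Finset.mul_prod_erase _ _ (Finset.mem_erase.2 ⟨hpq.symm, Finset.mem_univ q⟩)]
    rw [if_neg hpq.symm, if_pos rfl]
    rw [Finset.prod_congr rfl (fun r hr => ?_), Finset.prod_const_one, mul_one]
    have h2 := Finset.mem_erase.1 hr
    have h3 := Finset.mem_erase.1 h2.2
    rw [if_neg h3.1, if_neg h2.1]
  rw [Finset.sum_congr rfl fun i _ => h1 i,
    pi_sum_prod (fun r x => if r = p then f x else if r = q then g x else 1)]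
  refine Finset.prod_eq_zero (Finset.mem_univ p) ?_
  simp [hf]

/-- For grid points `u_i = (i₁,…,i_k)` (multi-indices `i ∈ {1,…,m}^k`) and
axis-rescaled points `v_i = (α₁i₁,…,α_k i_k)` with `α_q ≥ 0`, the best rigid alignment
`u ↦ t + R(u)` of `(u_i)` to `(v_i)` is achieved by the identity rotation together with the
translation `v̄ − ū`:
`Σ_i ‖v_i − (v̄ − ū) − u_i‖² ≤ Σ_i ‖v_i − t − R(u_i)‖²` for every orthogonal `R` and `t`. -/
theorem procrustes_grid_identity_optimal (k m : ℕ) (hk : 0 < k) (hm : 0 < m)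
    (α : Fin k → ℝ) (hα : ∀ q, 0 ≤ α q)
    (u v : (Fin k → Fin m) → EuclideanSpace ℝ (Fin k))
    (hu : ∀ i, u i = fun q => ((i q : ℕ) : ℝ) + 1)
    (hv : ∀ i, v i = fun q => α q * (((i q : ℕ) : ℝ) + 1))
    (ubar vbar : EuclideanSpace ℝ (Fin k))
    (hubar : ubar = ((Fintype.card (Fin k → Fin m) : ℝ))⁻¹ • ∑ i, u i)
    (hvbar : vbar = ((Fintype.card (Fin k → Fin m) : ℝ))⁻¹ • ∑ i, v i)
    (R : EuclideanSpace ℝ (Fin k) ≃ₗᵢ[ℝ] EuclideanSpace ℝ (Fin k))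
    (t : EuclideanSpace ℝ (Fin k)) :
    ∑ i, ‖v i - (vbar - ubar) - u i‖ ^ 2 ≤ ∑ i, ‖v i - t - R (u i)‖ ^ 2 := by
  have hm' : (m : ℝ) ≠ 0 := Nat.cast_ne_zero.2 hm.ne'
  have hNcard : (Fintype.card (Fin k → Fin m) : ℝ) = (m : ℝ) ^ k := by
    rw [Fintype.card_fun, Fintype.card_fin, Fintype.card_fin]; push_cast; ring
  have hN0 : (Fintype.card (Fin k → Fin m) : ℝ) ≠ 0 := by
    rw [hNcard]; positivity
  have hpow : (m : ℝ) ^ k = (m : ℝ) ^ (k - 1) * m := by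
    rw [← pow_succ]; congr 1; omega
  set μ : ℝ := (m : ℝ)⁻¹ * ∑ j : Fin m, ((j : ℝ) + 1) with hμ
  set c : Fin m → ℝ := fun j => ((j : ℝ) + 1) - μ with hc
  have hc0 : ∑ j, c j = 0 := by
    simp only [hc, Finset.sum_sub_distrib, Finset.sum_const, Finset.card_univ,
      Fintype.card_fin, nsmul_eq_mul, hμ]
    field_simp
    ring
  -- barycenter coordinates
  have hubar' : ∀ qq : Fin k, ubar qq = μ := by
    intro qq
    rw [hubar]
    have h1 : ((((Fintype.card (Fin k → Fin m) : ℝ))⁻¹ • ∑ i, u i) qq)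
        = ((Fintype.card (Fin k → Fin m) : ℝ))⁻¹ * (∑ i, u i) qq := rfl
    rw [h1, WithLp.ofLp_sum, Finset.sum_apply qq _ _]
    have h2 : ∀ i : Fin k → Fin m, u i qq = ((i qq : ℕ) : ℝ) + 1 := by
      intro i; rw [hu i]
    rw [Finset.sum_congr rfl fun i _ => h2 i, sum_eval (fun j => ((j : ℕ) : ℝ) + 1) qq,
      hNcard, hpow, hμ]
    have : (m : ℝ) ^ (k - 1) ≠ 0 := by positivity
    field_simp
  have hvbar' : ∀ qq : Fin k, vbar qq = α qq * μ := by
    intro qq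
    rw [hvbar]
    have h1 : ((((Fintype.card (Fin k → Fin m) : ℝ))⁻¹ • ∑ i, v i) qq)
        = ((Fintype.card (Fin k → Fin m) : ℝ))⁻¹ * (∑ i, v i) qq := rfl
    rw [h1, WithLp.ofLp_sum, Finset.sum_apply qq _ _]
    have h2 : ∀ i : Fin k → Fin m, v i qq = α qq * (((i qq : ℕ) : ℝ) + 1) := by
      intro i; rw [hv i]
    rw [Finset.sum_congr rfl fun i _ => h2 i,
      sum_eval (fun j => α qq * (((j : ℕ) : ℝ) + 1)) qq, hNcard, hpow, hμ,
      ← Finset.mul_sum]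
    have : (m : ℝ) ^ (k - 1) ≠ 0 := by positivity
    field_simp
  -- centered points
  set u' : (Fin k → Fin m) → EuclideanSpace ℝ (Fin k) := fun i => u i - ubar with hu'def
  set v' : (Fin k → Fin m) → EuclideanSpace ℝ (Fin k) := fun i => v i - vbar with hv'def
  have hu' : ∀ i qq, u' i qq = c (i qq) := by
    intro i qq
    have : u' i qq = u i qq - ubar qq := rfl
    rw [this, hu i, hubar' qq]
  have hv' : ∀ i qq, v' i qq = α qq * c (i qq) := by
    intro i qq
    have : v' i qq = v i qq - vbar qq := rfl
    rw [this, hv i, hvbar' qq, hc]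
    ring
  have hsum_u : ∑ i, u i = (Fintype.card (Fin k → Fin m) : ℝ) • ubar := by
    rw [hubar, smul_smul, mul_inv_cancel₀ hN0, one_smul]
  have hsum_v : ∑ i, v i = (Fintype.card (Fin k → Fin m) : ℝ) • vbar := by
    rw [hvbar, smul_smul, mul_inv_cancel₀ hN0, one_smul]
  have hsum_u' : ∑ i, u' i = 0 := by
    simp only [hu'def, Finset.sum_sub_distrib, hsum_u, Finset.sum_const, Finset.card_univ]
    rw [← Nat.cast_smul_eq_nsmul ℝ]
    abel
  have hsum_v' : ∑ i, v' i = 0 := by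
    simp only [hv'def, Finset.sum_sub_distrib, hsum_v, Finset.sum_const, Finset.card_univ]
    rw [← Nat.cast_smul_eq_nsmul ℝ]
    abel
  -- step 1: translation optimality
  have key2 : ∑ i, ‖v' i - R (u' i)‖ ^ 2 ≤ ∑ i, ‖v i - t - R (u i)‖ ^ 2 := by
    set b : EuclideanSpace ℝ (Fin k) := (vbar - R ubar) - t with hb
    have hexp : ∀ i : Fin k → Fin m, v i - t - R (u i) = (v' i - R (u' i)) + b := by
      intro i
      simp only [hu'def, hv'def, hb, map_sub]
      abel
    have hns : ∀ i : Fin k → Fin m, ‖v i - t - R (u i)‖ ^ 2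
        = ‖v' i - R (u' i)‖ ^ 2 + 2 * inner ℝ (v' i - R (u' i)) b + ‖b‖ ^ 2 := by
      intro i
      rw [hexp i]
      exact norm_add_sq_real _ _
    rw [Finset.sum_congr rfl fun i _ => hns i]
    rw [Finset.sum_add_distrib, Finset.sum_add_distrib]
    have hmid : (∑ i : Fin k → Fin m, 2 * inner ℝ (v' i - R (u' i)) b) = (0 : ℝ) := by
      rw [← Finset.mul_sum, ← sum_inner]
      simp only [Finset.sum_sub_distrib, hsum_v', ← map_sum, hsum_u', map_zero, sub_zero,
        inner_zero_left, mul_zero]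
    rw [hmid, add_zero]
    have : (0 : ℝ) ≤ ∑ i : Fin k → Fin m, ‖b‖ ^ 2 :=
      Finset.sum_nonneg fun i _ => sq_nonneg _
    linarith
  -- LHS rewrite
  have hLHS : ∀ i : Fin k → Fin m, v i - (vbar - ubar) - u i = v' i - u' i := by
    intro i
    simp only [hu'def, hv'def]
    abel
  rw [Finset.sum_congr rfl fun i _ => by rw [hLHS i]]
  refine le_trans ?_ key2
  -- step 2: centered comparison, reduce to inner products
  have hexp2 : ∀ (w : (Fin k → Fin m) → EuclideanSpace ℝ (Fin k)),
      ∀ i, ‖v' i - w i‖ ^ 2 = ‖v' i‖ ^ 2 - 2 * inner ℝ (v' i) (w i) + ‖w i‖ ^ 2 := by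
    intro w i
    exact norm_sub_sq_real _ _
  rw [Finset.sum_congr rfl fun i _ => hexp2 u' i,
    Finset.sum_congr rfl fun i _ => hexp2 (fun i => R (u' i)) i]
  rw [Finset.sum_add_distrib, Finset.sum_add_distrib, Finset.sum_sub_distrib,
    Finset.sum_sub_distrib]
  have hnormR : ∀ i : Fin k → Fin m, ‖R (u' i)‖ ^ 2 = ‖u' i‖ ^ 2 := by
    intro i; rw [R.norm_map]
  rw [Finset.sum_congr rfl fun i _ => hnormR i]
  have e1 : (∑ i : Fin k → Fin m, 2 * (inner ℝ (v' i) (u' i) : ℝ))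
      = 2 * ∑ i : Fin k → Fin m, (inner ℝ (v' i) (u' i) : ℝ) := by
    rw [Finset.mul_sum]
  have e2 : (∑ i : Fin k → Fin m, 2 * (inner ℝ (v' i) (R (u' i)) : ℝ))
      = 2 * ∑ i : Fin k → Fin m, (inner ℝ (v' i) (R (u' i)) : ℝ) := by
    rw [Finset.mul_sum]
  rw [e1, e2]
  -- the key inner-product comparison
  have hkey : ∑ i : Fin k → Fin m, (inner ℝ (v' i) (R (u' i)) : ℝ)
      ≤ ∑ i : Fin k → Fin m, (inner ℝ (v' i) (u' i) : ℝ) := by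
    set E : Fin k → EuclideanSpace ℝ (Fin k) := fun p => EuclideanSpace.single p (1:ℝ) with hE
    set S : ℝ := ∑ j, c j * c j with hS
    have hS0 : 0 ≤ S := Finset.sum_nonneg fun j _ => mul_self_nonneg _
    have hT0 : (0:ℝ) ≤ (m : ℝ) ^ (k - 1) * S := by positivity
    have hip : ∀ (x y : EuclideanSpace ℝ (Fin k)), (inner ℝ x y : ℝ) = ∑ p, x p * y p := by
      intro x y; simp [PiLp.inner_apply, RCLike.inner_apply, mul_comm]
    have hcov : ∀ p q : Fin k, ∑ i : Fin k → Fin m, c (i p) * c (i q)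
        = if p = q then (m : ℝ) ^ (k - 1) * S else 0 := by
      intro p q
      by_cases h : p = q
      · subst h
        rw [if_pos rfl, hS]
        exact sum_eval (fun j => c j * c j) p
      · rw [if_neg h]
        exact sum_eval2 c c p q h hc0
    have hrep : ∀ i : Fin k → Fin m, u' i = ∑ q, c (i q) • E q := by
      intro i
      ext qq
      rw [hu' i qq, WithLp.ofLp_sum, Finset.sum_apply qq _ _]
      simp [hE, EuclideanSpace.single_apply]
    have hRcoord : ∀ (i : Fin k → Fin m) (p : Fin k),
        (R (u' i)) p = ∑ q, c (i q) * (R (E q)) p := by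
      intro i p
      rw [hrep i, map_sum]
      rw [WithLp.ofLp_sum, Finset.sum_apply p _ _]
      refine Finset.sum_congr rfl fun q _ => ?_
      rw [map_smul]
      rfl
    have h1 : ∑ i : Fin k → Fin m, (inner ℝ (v' i) (R (u' i)) : ℝ)
        = ∑ p, (α p * (R (E p)) p) * ((m : ℝ) ^ (k - 1) * S) := by
      calc ∑ i : Fin k → Fin m, (inner ℝ (v' i) (R (u' i)) : ℝ)
          = ∑ i : Fin k → Fin m, ∑ p, ∑ q, (α p * (R (E q)) p) * (c (i p) * c (i q)) := by
            refine Finset.sum_congr rfl fun i _ => ?_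
            rw [hip]
            refine Finset.sum_congr rfl fun p _ => ?_
            rw [hv' i p, hRcoord i p, Finset.mul_sum]
            refine Finset.sum_congr rfl fun q _ => ?_
            ring
        _ = ∑ p, ∑ q, (α p * (R (E q)) p) * ∑ i : Fin k → Fin m, (c (i p) * c (i q)) := by
            rw [Finset.sum_comm]
            refine Finset.sum_congr rfl fun p _ => ?_
            rw [Finset.sum_comm]
            refine Finset.sum_congr rfl fun q _ => ?_
            rw [← Finset.mul_sum]
        _ = ∑ p, (α p * (R (E p)) p) * ((m : ℝ) ^ (k - 1) * S) := by
            refine Finset.sum_congr rfl fun p _ => ?_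
            rw [Finset.sum_congr rfl fun q _ => by rw [hcov p q]]
            simp [mul_ite, Finset.sum_ite_eq]
    have h2 : ∑ i : Fin k → Fin m, (inner ℝ (v' i) (u' i) : ℝ)
        = ∑ p, α p * ((m : ℝ) ^ (k - 1) * S) := by
      calc ∑ i : Fin k → Fin m, (inner ℝ (v' i) (u' i) : ℝ)
          = ∑ i : Fin k → Fin m, ∑ p, α p * (c (i p) * c (i p)) := by
            refine Finset.sum_congr rfl fun i _ => ?_
            rw [hip]
            refine Finset.sum_congr rfl fun p _ => ?_
            rw [hv' i p, hu' i p]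
            ring
        _ = ∑ p, α p * ∑ i : Fin k → Fin m, (c (i p) * c (i p)) := by
            rw [Finset.sum_comm]
            refine Finset.sum_congr rfl fun p _ => ?_
            rw [← Finset.mul_sum]
        _ = _ := by
            refine Finset.sum_congr rfl fun p _ => ?_
            rw [sum_eval (fun j => c j * c j) p]
    rw [h1, h2]
    refine Finset.sum_le_sum fun p _ => ?_
    have hρ : (R (E p)) p ≤ 1 := by
      have e3 : (R (E p)) p = (inner ℝ (E p) (R (E p)) : ℝ) := by
        simp [hE, EuclideanSpace.inner_single_left]
      rw [e3]
      calc (inner ℝ (E p) (R (E p)) : ℝ) ≤ ‖E p‖ * ‖R (E p)‖ := real_inner_le_norm _ _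
        _ = 1 := by simp [hE, R.norm_map, EuclideanSpace.norm_single]
    calc α p * (R (E p)) p * ((m : ℝ) ^ (k - 1) * S)
        ≤ α p * 1 * ((m : ℝ) ^ (k - 1) * S) :=
          mul_le_mul_of_nonneg_right (mul_le_mul_of_nonneg_left hρ (hα p)) hT0
      _ = α p * ((m : ℝ) ^ (k - 1) * S) := by ring
  linarith
end
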